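/- arXiv:2603.10406 — 3 statements merged into one kernel-verified Lean document; each statement's English description precedes it below -/
import Mathlib

section
/- Let n ≥ 4 be an integer. Then the matrix n·I − Q'_n is positive semidefinite and has rank n−1. -/
open Matrix

/-- The ascending sorted list of eigenvalues (with multiplicity) of a real
symmetric (Hermitian) matrix; junk value `[]` otherwise. -/
noncomputable def eigsList {m : Type*} [Fintype m] [DecidableEq m]
    (M : Matrix m m ℝ) : List ℝ :=
  if h : M.IsHermitian then Multiset.sort (Finset.univ.val.map h.eigenvalues) (· ≤ ·)
  else []

/-- The `k`-th largest eigenvalue (1-indexed, counted with multiplicity). -/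
noncomputable def kthLargest {m : Type*} [Fintype m] [DecidableEq m]
    (M : Matrix m m ℝ) (k : ℕ) : ℝ :=
  (eigsList M).getD (Fintype.card m - k) 0

/-- The `k`-th smallest eigenvalue (1-indexed, counted with multiplicity). -/
noncomputable def kthSmallest {m : Type*} [Fintype m] [DecidableEq m]
    (M : Matrix m m ℝ) (k : ℕ) : ℝ :=
  (eigsList M).getD (k - 1) 0

/-- The Laplacian `𝔏(M) = diag(M·1) − M`. -/
noncomputable def Lap {n : ℕ} (M : Matrix (Fin n) (Fin n) ℝ) : Matrix (Fin n) (Fin n) ℝ :=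
  Matrix.diagonal (fun i => ∑ j, M i j) - M

/-- The matrix `Q_n` (1-indexed description, realized on `Fin n`). -/
noncomputable def Qmat (n : ℕ) : Matrix (Fin n) (Fin n) ℝ := fun i j =>
  let d := ((i.val : ℤ) - (j.val : ℤ)).natAbs
  if d = 0 then
    (if i.val = 0 ∨ i.val = n - 1 then ((n : ℝ) ^ 2 - n - 6) / 2
     else if i.val = 1 ∨ i.val = n - 2 then ((n : ℝ) ^ 2 - 3 * n - 2) / 2
     else ((n : ℝ) ^ 2 - 3 * n - 6) / 2)
  else if d = 1 then (n : ℝ) - 2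
  else if d = 2 then 2
  else 0

/-- The matrix `Q'_n` (1-indexed description, realized on `Fin n`). -/
noncomputable def Qp (n : ℕ) : Matrix (Fin n) (Fin n) ℝ := fun i j =>
  let a := i.val + 1
  let b := j.val + 1
  if (a = 1 ∧ b = 2) ∨ (a = 2 ∧ b = 1) then (n : ℝ) - 2
  else if (a = 1 ∧ b = 3) ∨ (a = 3 ∧ b = 1) then 2
  else if a = 2 ∧ b = 2 then 1
  else if (a = 2 ∧ b = 3) ∨ (a = 3 ∧ b = 2) then 1
  else if a = 3 ∧ b = 3 then (n : ℝ) - 4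
  else if (3 ≤ a ∧ a ≤ n - 1 ∧ b = a + 1) ∨ (3 ≤ b ∧ b ≤ n - 1 ∧ a = b + 1) then 1
  else if a = b ∧ 4 ≤ a ∧ a ≤ n - 1 then (n : ℝ) - 2
  else if a = n ∧ b = n then (n : ℝ) - 1
  else 0

noncomputable def evv (n a : ℕ) : Fin n → ℝ := fun i => if i.val = a then 1 else 0

noncomputable def Ln (n a b : ℕ) : Matrix (Fin n) (Fin n) ℝ :=
  fun i j => (evv n a i - evv n b i) * (evv n a j - evv n b j)

noncomputable def xe {n : ℕ} (x : Fin n → ℝ) (a : ℕ) : ℝ := ∑ j, evv n a j * x j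

set_option linter.unreachableTactic false in
set_option linter.unusedTactic false in
set_option linter.unnecessarySeqFocus false in
set_option maxHeartbeats 1000000 in
lemma key (n : ℕ) (hn : 4 ≤ n) (i j : ℕ) (hi : i < n) (hj : j < n) :
    (n:ℝ) * (if i = j then 1 else 0)
      - (if (i+1 = 1 ∧ j+1 = 2) ∨ (i+1 = 2 ∧ j+1 = 1) then (n : ℝ) - 2
         else if (i+1 = 1 ∧ j+1 = 3) ∨ (i+1 = 3 ∧ j+1 = 1) then 2
         else if i+1 = 2 ∧ j+1 = 2 then 1
         else if (i+1 = 2 ∧ j+1 = 3) ∨ (i+1 = 3 ∧ j+1 = 2) then 1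
         else if i+1 = 3 ∧ j+1 = 3 then (n : ℝ) - 4
         else if (3 ≤ i+1 ∧ i+1 ≤ n - 1 ∧ j+1 = i+2) ∨ (3 ≤ j+1 ∧ j+1 ≤ n - 1 ∧ i+1 = j+2) then 1
         else if i+1 = j+1 ∧ 4 ≤ i+1 ∧ i+1 ≤ n - 1 then (n : ℝ) - 2
         else if i+1 = n ∧ j+1 = n then (n : ℝ) - 1
         else 0)
    = ((n:ℝ)-2) * (((if i = 0 then 1 else 0) - (if i = 1 then 1 else 0)) *
                   ((if j = 0 then 1 else 0) - (if j = 1 then 1 else 0)))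
      + 2 * (((if i = 0 then 1 else 0) - (if i = 2 then 1 else 0)) *
             ((if j = 0 then 1 else 0) - (if j = 2 then 1 else 0)))
      + (((if i = 1 then 1 else 0) - (if i = 2 then 1 else 0)) *
         ((if j = 1 then 1 else 0) - (if j = 2 then 1 else 0)))
      + (((if i = j ∧ 2 ≤ i ∧ i < n-1 then 1 else 0)
          - (if j = i+1 ∧ 2 ≤ i ∧ i < n-1 then 1 else 0)
          - (if i = j+1 ∧ 2 ≤ j ∧ j < n-1 then 1 else 0))
         + (if i = j ∧ 3 ≤ i ∧ i < n then 1 else 0)) := by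
  have h5 : i = 0 ∨ i = 1 ∨ i = 2 ∨ 3 ≤ i := by omega
  have h6 : j = 0 ∨ j = 1 ∨ j = 2 ∨ 3 ≤ j := by omega
  rcases h5 with rfl | rfl | rfl | hi3 <;> rcases h6 with rfl | rfl | rfl | hj3
  · norm_num <;> (try split_ifs) <;> first | rfl | ring1 | (exfalso; omega) | (intro _; exfalso; omega) | omega | norm_num
  · norm_num <;> (try split_ifs) <;> first | rfl | ring1 | (exfalso; omega) | (intro _; exfalso; omega) | omega | norm_num
  · norm_num <;> (try split_ifs) <;> first | rfl | ring1 | (exfalso; omega) | (intro _; exfalso; omega) | omega | norm_num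
  · simp only [eq_false (show ¬ j = 0 from by omega), eq_false (show ¬ j = 1 from by omega), eq_false (show ¬ j = 2 from by omega), eq_false (show ¬ j + 1 = 1 from by omega), eq_false (show ¬ j + 1 = 2 from by omega), eq_false (show ¬ j + 1 = 3 from by omega)]
    norm_num <;> (try split_ifs) <;> first | rfl | ring1 | (exfalso; omega) | (intro _; exfalso; omega) | omega | norm_num
  · norm_num <;> (try split_ifs) <;> first | rfl | ring1 | (exfalso; omega) | (intro _; exfalso; omega) | omega | norm_num
  · norm_num <;> (try split_ifs) <;> first | rfl | ring1 | (exfalso; omega) | (intro _; exfalso; omega) | omega | norm_num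
  · norm_num <;> (try split_ifs) <;> first | rfl | ring1 | (exfalso; omega) | (intro _; exfalso; omega) | omega | norm_num
  · simp only [eq_false (show ¬ j = 0 from by omega), eq_false (show ¬ j = 1 from by omega), eq_false (show ¬ j = 2 from by omega), eq_false (show ¬ j + 1 = 1 from by omega), eq_false (show ¬ j + 1 = 2 from by omega), eq_false (show ¬ j + 1 = 3 from by omega)]
    norm_num <;> (try split_ifs) <;> first | rfl | ring1 | (exfalso; omega) | (intro _; exfalso; omega) | omega | norm_num
  · norm_num <;> (try split_ifs) <;> first | rfl | ring1 | (exfalso; omega) | (intro _; exfalso; omega) | omega | norm_num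
  · norm_num <;> (try split_ifs) <;> first | rfl | ring1 | (exfalso; omega) | (intro _; exfalso; omega) | omega | norm_num
  · norm_num <;> (try split_ifs) <;> first | rfl | ring1 | (exfalso; omega) | (intro _; exfalso; omega) | omega | norm_num
  · simp only [eq_false (show ¬ j = 0 from by omega), eq_false (show ¬ j = 1 from by omega), eq_false (show ¬ j = 2 from by omega), eq_false (show ¬ j + 1 = 1 from by omega), eq_false (show ¬ j + 1 = 2 from by omega), eq_false (show ¬ j + 1 = 3 from by omega)]
    norm_num <;> (try split_ifs) <;> first | rfl | ring1 | (exfalso; omega) | (intro _; exfalso; omega) | omega | norm_num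
  · simp only [eq_false (show ¬ i = 0 from by omega), eq_false (show ¬ i = 1 from by omega), eq_false (show ¬ i = 2 from by omega), eq_false (show ¬ i + 1 = 1 from by omega), eq_false (show ¬ i + 1 = 2 from by omega), eq_false (show ¬ i + 1 = 3 from by omega)]
    norm_num <;> (try split_ifs) <;> first | rfl | ring1 | (exfalso; omega) | (intro _; exfalso; omega) | omega | norm_num
  · simp only [eq_false (show ¬ i = 0 from by omega), eq_false (show ¬ i = 1 from by omega), eq_false (show ¬ i = 2 from by omega), eq_false (show ¬ i + 1 = 1 from by omega), eq_false (show ¬ i + 1 = 2 from by omega), eq_false (show ¬ i + 1 = 3 from by omega)]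
    norm_num <;> (try split_ifs) <;> first | rfl | ring1 | (exfalso; omega) | (intro _; exfalso; omega) | omega | norm_num
  · simp only [eq_false (show ¬ i = 0 from by omega), eq_false (show ¬ i = 1 from by omega), eq_false (show ¬ i = 2 from by omega), eq_false (show ¬ i + 1 = 1 from by omega), eq_false (show ¬ i + 1 = 2 from by omega), eq_false (show ¬ i + 1 = 3 from by omega)]
    norm_num <;> (try split_ifs) <;> first | rfl | ring1 | (exfalso; omega) | (intro _; exfalso; omega) | omega | norm_num
  · rcases (show j = i ∨ j = i+1 ∨ i = j+1 ∨ i+2 ≤ j ∨ j+2 ≤ i from by omega) with rfl | rfl | rfl | h7 | h7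
    · simp only [eq_false (show ¬ j = 0 from by omega), eq_false (show ¬ j = 1 from by omega), eq_false (show ¬ j = 2 from by omega), eq_false (show ¬ j + 1 = 1 from by omega), eq_false (show ¬ j + 1 = 2 from by omega), eq_false (show ¬ j + 1 = 3 from by omega)]
      norm_num <;> (try split_ifs) <;> first | rfl | ring1 | (exfalso; omega) | (intro _; exfalso; omega) | omega | norm_num
    · simp only [eq_false (show ¬ i = 0 from by omega), eq_false (show ¬ i = 1 from by omega), eq_false (show ¬ i = 2 from by omega), eq_false (show ¬ i + 1 = 1 from by omega), eq_false (show ¬ i + 1 = 2 from by omega), eq_false (show ¬ i + 1 = 3 from by omega)]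
      norm_num <;> (try split_ifs) <;> first | rfl | ring1 | (exfalso; omega) | (intro _; exfalso; omega) | omega | norm_num
    · simp only [eq_false (show ¬ j = 0 from by omega), eq_false (show ¬ j = 1 from by omega), eq_false (show ¬ j = 2 from by omega), eq_false (show ¬ j + 1 = 1 from by omega), eq_false (show ¬ j + 1 = 2 from by omega), eq_false (show ¬ j + 1 = 3 from by omega)]
      norm_num <;> (try split_ifs) <;> first | rfl | ring1 | (exfalso; omega) | (intro _; exfalso; omega) | omega | norm_num
    · simp only [eq_false (show ¬ i = 0 from by omega), eq_false (show ¬ i = 1 from by omega), eq_false (show ¬ i = 2 from by omega), eq_false (show ¬ i + 1 = 1 from by omega), eq_false (show ¬ i + 1 = 2 from by omega), eq_false (show ¬ i + 1 = 3 from by omega), eq_false (show ¬ j = 0 from by omega), eq_false (show ¬ j = 1 from by omega), eq_false (show ¬ j = 2 from by omega), eq_false (show ¬ j + 1 = 1 from by omega), eq_false (show ¬ j + 1 = 2 from by omega), eq_false (show ¬ j + 1 = 3 from by omega), eq_false (show ¬ i = j from by omega), eq_false (show ¬ j = i from by omega), eq_false (show ¬ j = i + 1 from by omega), eq_false (show ¬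 i = j + 1 from by omega), eq_false (show ¬ j + 1 = i + 2 from by omega), eq_false (show ¬ i + 1 = j + 2 from by omega), eq_false (show ¬ i + 1 = j + 1 from by omega), eq_false (show ¬ j + 1 = i + 1 from by omega)]
      norm_num <;> (try split_ifs) <;> first | rfl | ring1 | (exfalso; omega) | (intro _; exfalso; omega) | omega | norm_num
    · simp only [eq_false (show ¬ i = 0 from by omega), eq_false (show ¬ i = 1 from by omega), eq_false (show ¬ i = 2 from by omega), eq_false (show ¬ i + 1 = 1 from by omega), eq_false (show ¬ i + 1 = 2 from by omega), eq_false (show ¬ i + 1 = 3 from by omega), eq_false (show ¬ j = 0 from by omega), eq_false (show ¬ j = 1 from by omega), eq_false (show ¬ j = 2 from by omega), eq_false (show ¬ j + 1 = 1 from by omega), eq_false (show ¬ j + 1 = 2 from by omega), eq_false (show ¬ j + 1 = 3 from by omega), eq_false (show ¬ i = j from by omega), eq_false (show ¬ j = i from by omega), eq_false (show ¬ j = i + 1 from by omega), eq_false (show ¬ i = j + 1 from by omega), eq_false (show ¬ j + 1 = i + 2 from by omega), eq_false (show ¬ i + 1 = j + 2 from by omega), eq_false (show ¬ i + 1 = j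 + 1 from by omega), eq_false (show ¬ j + 1 = i + 1 from by omega)]
      norm_num <;> (try split_ifs) <;> first | rfl | ring1 | (exfalso; omega) | (intro _; exfalso; omega) | omega | norm_num

lemma evv_inner {n a b : ℕ} (x : Fin n → ℝ) :
    ∑ j, (evv n a j - evv n b j) * x j = xe x a - xe x b := by
  simp [xe, sub_mul, Finset.sum_sub_distrib]

lemma xe_lt {n : ℕ} (x : Fin n → ℝ) {a : ℕ} (h : a < n) : xe x a = x ⟨a, h⟩ := by
  rw [xe, Finset.sum_eq_single (⟨a, h⟩ : Fin n)]
  · simp [evv]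
  · intro b _ hb
    have : (b : ℕ) ≠ a := fun hba => hb (Fin.ext hba)
    simp [evv, this]
  · simp

lemma Ln_mulVec {n a b : ℕ} (x : Fin n → ℝ) :
    Ln n a b *ᵥ x = fun i => (evv n a i - evv n b i) * (xe x a - xe x b) := by
  funext i
  simp only [Ln, Matrix.mulVec, dotProduct, mul_assoc, ← Finset.mul_sum]
  rw [evv_inner]

lemma Ln_quad {n a b : ℕ} (x : Fin n → ℝ) :
    x ⬝ᵥ (Ln n a b *ᵥ x) = (xe x a - xe x b)^2 := by
  rw [Ln_mulVec]
  show (∑ i, x i * ((evv n a i - evv n b i) * (xe x a - xe x b))) = _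
  calc (∑ i, x i * ((evv n a i - evv n b i) * (xe x a - xe x b)))
      = (∑ i, (evv n a i - evv n b i) * x i) * (xe x a - xe x b) := by
        rw [Finset.sum_mul]; exact Finset.sum_congr rfl fun i _ => by ring
    _ = _ := by rw [evv_inner]; ring

lemma sum_Ln_apply (n : ℕ) (i j : Fin n) :
    (∑ k ∈ Finset.Ico 2 (n-1), Ln n k (k+1)) i j =
      (((if (i:ℕ) = (j:ℕ) ∧ 2 ≤ (i:ℕ) ∧ (i:ℕ) < n-1 then (1:ℝ) else 0)
        - (if (j:ℕ) = (i:ℕ) + 1 ∧ 2 ≤ (i:ℕ) ∧ (i:ℕ) < n-1 then 1 else 0)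
        - (if (i:ℕ) = (j:ℕ) + 1 ∧ 2 ≤ (j:ℕ) ∧ (j:ℕ) < n-1 then 1 else 0))
       + (if (i:ℕ) = (j:ℕ) ∧ 3 ≤ (i:ℕ) ∧ (i:ℕ) < n then 1 else 0)) := by
  rw [Matrix.sum_apply]
  have expand : ∀ k ∈ Finset.Ico 2 (n-1), Ln n k (k+1) i j
      = (((if (i:ℕ) = k then (1:ℝ) else 0) * (if (j:ℕ) = k then 1 else 0)
         - (if (i:ℕ) = k then 1 else 0) * (if (j:ℕ) = k+1 then 1 else 0))
         - (if (i:ℕ) = k+1 then 1 else 0) * (if (j:ℕ) = k then 1 else 0))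
         + (if (i:ℕ) = k+1 then 1 else 0) * (if (j:ℕ) = k+1 then 1 else 0) := by
    intro k _; simp only [Ln, evv]; ring
  rw [Finset.sum_congr rfl expand, Finset.sum_add_distrib, Finset.sum_sub_distrib,
    Finset.sum_sub_distrib]
  have S1 : ∑ k ∈ Finset.Ico 2 (n-1),
      (if (i:ℕ) = k then (1:ℝ) else 0) * (if (j:ℕ) = k then 1 else 0)
      = (if (i:ℕ) = (j:ℕ) ∧ 2 ≤ (i:ℕ) ∧ (i:ℕ) < n-1 then (1:ℝ) else 0) := by
    simp only [ite_mul, one_mul, zero_mul, Finset.sum_ite_eq, Finset.mem_Ico]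
    split_ifs <;> first | rfl | (exfalso; omega)
  have S2 : ∑ k ∈ Finset.Ico 2 (n-1),
      (if (i:ℕ) = k then (1:ℝ) else 0) * (if (j:ℕ) = k+1 then 1 else 0)
      = (if (j:ℕ) = (i:ℕ) + 1 ∧ 2 ≤ (i:ℕ) ∧ (i:ℕ) < n-1 then (1:ℝ) else 0) := by
    simp only [ite_mul, one_mul, zero_mul, Finset.sum_ite_eq, Finset.mem_Ico]
    split_ifs <;> first | rfl | (exfalso; omega)
  have S3 : ∑ k ∈ Finset.Ico 2 (n-1),
      (if (i:ℕ) = k+1 then (1:ℝ) else 0) * (if (j:ℕ) = k then 1 else 0)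
      = (if (i:ℕ) = (j:ℕ) + 1 ∧ 2 ≤ (j:ℕ) ∧ (j:ℕ) < n-1 then (1:ℝ) else 0) := by
    rw [Finset.sum_congr rfl (fun k _ => mul_comm _ _)]
    simp only [ite_mul, one_mul, zero_mul, Finset.sum_ite_eq, Finset.mem_Ico]
    split_ifs <;> first | rfl | (exfalso; omega)
  have S4 : ∑ k ∈ Finset.Ico 2 (n-1),
      (if (i:ℕ) = k+1 then (1:ℝ) else 0) * (if (j:ℕ) = k+1 then 1 else 0)
      = (if (i:ℕ) = (j:ℕ) ∧ 3 ≤ (i:ℕ) ∧ (i:ℕ) < n then (1:ℝ) else 0) := by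
    by_cases hij : (i:ℕ) = (j:ℕ)
    · have congr1 : ∀ k ∈ Finset.Ico 2 (n-1),
          (if (i:ℕ) = k+1 then (1:ℝ) else 0) * (if (j:ℕ) = k+1 then 1 else 0)
          = (if (i:ℕ) - 1 = k then (if 3 ≤ (i:ℕ) then (1:ℝ) else 0) else 0) := by
        intro k hk
        rw [Finset.mem_Ico] at hk
        split_ifs <;> first | ring1 | (exfalso; omega)
      rw [Finset.sum_congr rfl congr1, Finset.sum_ite_eq]
      simp only [Finset.mem_Ico]
      split_ifs <;> first | rfl | (exfalso; omega)
    · rw [Finset.sum_eq_zero, eq_comm, ite_eq_right_iff]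
      · intro h; exact absurd h.1 hij
      · intro k _
        split_ifs with h1 h2 <;> first | ring1 | (exfalso; omega)
  rw [S1, S2, S3, S4]

lemma sum_mulVec {n : ℕ} (s : Finset ℕ) (f : ℕ → Matrix (Fin n) (Fin n) ℝ) (x : Fin n → ℝ) :
    (∑ k ∈ s, f k) *ᵥ x = ∑ k ∈ s, f k *ᵥ x := by
  funext i
  simp only [Matrix.mulVec, dotProduct, Matrix.sum_apply, Finset.sum_apply,
    Finset.sum_mul]
  exact Finset.sum_comm

lemma dot_sum {n : ℕ} (s : Finset ℕ) (f : ℕ → Fin n → ℝ) (x : Fin n → ℝ) :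
    x ⬝ᵥ (∑ k ∈ s, f k) = ∑ k ∈ s, x ⬝ᵥ f k := by
  simp only [dotProduct, Finset.sum_apply, Finset.mul_sum]
  exact Finset.sum_comm

lemma decomp (n : ℕ) (hn : 4 ≤ n) :
    (n : ℝ) • (1 : Matrix (Fin n) (Fin n) ℝ) - Qp n
      = ((n:ℝ)-2) • Ln n 0 1 + (2:ℝ) • Ln n 0 2 + Ln n 1 2
        + ∑ k ∈ Finset.Ico 2 (n-1), Ln n k (k+1) := by
  ext i j
  rw [Matrix.sub_apply, Matrix.smul_apply, Matrix.one_apply, Matrix.add_apply, Matrix.add_apply,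
    Matrix.add_apply, Matrix.smul_apply, Matrix.smul_apply, sum_Ln_apply]
  simp only [Ln, evv, smul_eq_mul, Qp, Fin.ext_iff]
  exact key n hn i j i.isLt j.isLt

lemma quad (n : ℕ) (hn : 4 ≤ n) (x : Fin n → ℝ) :
    x ⬝ᵥ (((n:ℝ) • (1 : Matrix (Fin n) (Fin n) ℝ) - Qp n) *ᵥ x)
      = ((n:ℝ)-2) * (xe x 0 - xe x 1)^2 + 2 * (xe x 0 - xe x 2)^2 + (xe x 1 - xe x 2)^2
        + ∑ k ∈ Finset.Ico 2 (n-1), (xe x k - xe x (k+1))^2 := by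
  rw [decomp n hn, Matrix.add_mulVec, Matrix.add_mulVec, Matrix.add_mulVec,
    Matrix.smul_mulVec, Matrix.smul_mulVec, sum_mulVec,
    dotProduct_add, dotProduct_add, dotProduct_add, dotProduct_smul, dotProduct_smul,
    dot_sum, Ln_quad, Ln_quad, Ln_quad, Finset.sum_congr rfl (fun k _ => Ln_quad x)]
  simp [smul_eq_mul]

lemma herm (n : ℕ) (hn : 4 ≤ n) :
    (((n:ℝ) • (1 : Matrix (Fin n) (Fin n) ℝ) - Qp n)).IsHermitian := by
  have h : ∀ (a b : ℕ), (Ln n a b)ᴴ = Ln n a b := by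
    intro a b; ext i j
    simp only [Matrix.conjTranspose_apply, Ln, star_trivial]
    ring
  rw [Matrix.IsHermitian, decomp n hn]
  rw [Matrix.conjTranspose_add, Matrix.conjTranspose_add, Matrix.conjTranspose_add,
    Matrix.conjTranspose_smul, Matrix.conjTranspose_smul, Matrix.conjTranspose_sum]
  simp only [h, star_trivial]

theorem stmt5 (n : ℕ) (hn : 4 ≤ n) :
    (((n : ℝ) • (1 : Matrix (Fin n) (Fin n) ℝ) - Qp n).PosSemidef) ∧
      (((n : ℝ) • (1 : Matrix (Fin n) (Fin n) ℝ) - Qp n).rank = n - 1) := by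
  have hn2 : (0:ℝ) ≤ (n:ℝ) - 2 := by
    have : (4:ℝ) ≤ (n:ℝ) := by exact_mod_cast hn
    linarith
  have hpsd : (((n : ℝ) • (1 : Matrix (Fin n) (Fin n) ℝ) - Qp n).PosSemidef) := by
    refine Matrix.posSemidef_iff_dotProduct_mulVec.mpr ⟨herm n hn, fun x => ?_⟩
    rw [star_trivial, quad n hn x]
    have h4 : (0:ℝ) ≤ ∑ k ∈ Finset.Ico 2 (n-1), (xe x k - xe x (k+1))^2 :=
      Finset.sum_nonneg fun k _ => sq_nonneg _
    have h1 := mul_nonneg hn2 (sq_nonneg (xe x 0 - xe x 1))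
    have h2 := sq_nonneg (xe x 0 - xe x 2)
    have h3 := sq_nonneg (xe x 1 - xe x 2)
    linarith
  refine ⟨hpsd, ?_⟩
  have hker : LinearMap.ker (Matrix.mulVecLin ((n:ℝ) • (1 : Matrix (Fin n) (Fin n) ℝ) - Qp n))
      = Submodule.span ℝ {(fun _ => (1:ℝ) : Fin n → ℝ)} := by
    apply le_antisymm
    · intro x hx
      have hx0 : ((n:ℝ) • (1 : Matrix (Fin n) (Fin n) ℝ) - Qp n) *ᵥ x = 0 := by
        rw [← Matrix.mulVecLin_apply]; exact hx
      have hq0 : ((n:ℝ)-2) * (xe x 0 - xe x 1)^2 + 2 * (xe x 0 - xe x 2)^2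
          + (xe x 1 - xe x 2)^2 + ∑ k ∈ Finset.Ico 2 (n-1), (xe x k - xe x (k+1))^2 = 0 := by
        rw [← quad n hn x, hx0, dotProduct_zero]
      have h4 : (0:ℝ) ≤ ∑ k ∈ Finset.Ico 2 (n-1), (xe x k - xe x (k+1))^2 :=
        Finset.sum_nonneg fun k _ => sq_nonneg _
      have h1 := mul_nonneg hn2 (sq_nonneg (xe x 0 - xe x 1))
      have h2 := sq_nonneg (xe x 0 - xe x 2)
      have h3 := sq_nonneg (xe x 1 - xe x 2)
      have hne : ((n:ℝ) - 2) ≠ 0 := by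
        have : (4:ℝ) ≤ (n:ℝ) := by exact_mod_cast hn
        intro h; linarith
      have sq0 : ∀ a : ℝ, a^2 = 0 → a = 0 := fun a h => (pow_eq_zero_iff two_ne_zero).mp h
      have e1 : xe x 1 = xe x 0 := by
        have hA : ((n:ℝ)-2) * (xe x 0 - xe x 1)^2 = 0 := le_antisymm (by linarith) h1
        have := sq0 _ ((mul_eq_zero.mp hA).resolve_left hne)
        linarith
      have e2 : xe x 2 = xe x 0 := by
        have hB : (2:ℝ) * (xe x 0 - xe x 2)^2 = 0 := le_antisymm (by nlinarith) (by positivity)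
        have := sq0 _ ((mul_eq_zero.mp hB).resolve_left (by norm_num))
        linarith
      have hS : ∀ k ∈ Finset.Ico 2 (n-1), xe x (k+1) = xe x k := by
        have hz : ∑ k ∈ Finset.Ico 2 (n-1), (xe x k - xe x (k+1))^2 = 0 := by linarith
        intro k hk
        have := (Finset.sum_eq_zero_iff_of_nonneg (fun k _ => sq_nonneg _)).mp hz k hk
        have := sq0 _ this
        linarith
      have hconst : ∀ k, k < n → xe x k = xe x 0 := by
        intro k
        induction k using Nat.strong_induction_on with
        | _ k ih =>
          intro hk
          match k, hk with
          | 0, _ => rfl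
          | 1, _ => exact e1
          | 2, _ => exact e2
          | (m+3), hk =>
            have hm : (m+2) ∈ Finset.Ico 2 (n-1) := by
              rw [Finset.mem_Ico]; omega
            have h := hS (m+2) hm
            rw [h]
            exact ih (m+2) (by omega) (by omega)
      refine Submodule.mem_span_singleton.mpr ⟨xe x 0, ?_⟩
      funext i
      have hi := hconst (i : ℕ) i.isLt
      rw [xe_lt x i.isLt] at hi
      simp only [Pi.smul_apply, smul_eq_mul, mul_one]
      rw [← hi]
    · rw [Submodule.span_le, Set.singleton_subset_iff, SetLike.mem_coe, LinearMap.mem_ker,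
        Matrix.mulVecLin_apply, decomp n hn]
      have z : ∀ a b : ℕ, a < n → b < n → Ln n a b *ᵥ (fun _ => (1:ℝ)) = 0 := by
        intro a b ha hb
        rw [Ln_mulVec]
        funext i
        simp [xe_lt _ ha, xe_lt _ hb]
      rw [Matrix.add_mulVec, Matrix.add_mulVec, Matrix.add_mulVec, Matrix.smul_mulVec,
        Matrix.smul_mulVec, sum_mulVec,
        z 0 1 (by omega) (by omega), z 0 2 (by omega) (by omega), z 1 2 (by omega) (by omega),
        Finset.sum_eq_zero (fun k hk => z k (k+1)
          (by rw [Finset.mem_Ico] at hk; omega) (by rw [Finset.mem_Ico] at hk; omega))]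
      simp
  have hones : ((fun _ => (1:ℝ)) : Fin n → ℝ) ≠ 0 := by
    intro h
    have := congrFun h ⟨0, by omega⟩
    norm_num at this
  have hk1 : Module.finrank ℝ
      (LinearMap.ker (Matrix.mulVecLin ((n:ℝ) • (1 : Matrix (Fin n) (Fin n) ℝ) - Qp n))) = 1 := by
    rw [hker]
    exact finrank_span_singleton hones
  have hrn := LinearMap.finrank_range_add_finrank_ker
    (Matrix.mulVecLin ((n:ℝ) • (1 : Matrix (Fin n) (Fin n) ℝ) - Qp n))
  rw [hk1, Module.finrank_fintype_fun_eq_card, Fintype.card_fin] at hrn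
  show Module.finrank ℝ _ = n - 1
  omega
end

section
/- Let n ≥ 6 be an integer. Then μ₂(𝔏(Q'_n)) ≤ 2 − 2cos(2π/(n−3)), where μ₂ denotes the second-smallest eigenvalue. -/
open Matrix

lemma sum_dotProduct' {k n : ℕ} (f : Fin k → Fin n → ℝ) (w : Fin n → ℝ) :
    (∑ i, f i) ⬝ᵥ w = ∑ i, f i ⬝ᵥ w := by
  simp only [dotProduct, Finset.sum_apply, Finset.sum_mul]
  exact Finset.sum_comm

lemma dotProduct_sum' {k n : ℕ} (w : Fin n → ℝ) (f : Fin k → Fin n → ℝ) :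
    w ⬝ᵥ (∑ i, f i) = ∑ i, w ⬝ᵥ f i := by
  simp only [dotProduct, Finset.sum_apply, Finset.mul_sum]
  exact Finset.sum_comm

lemma mulVec_sum' {k n : ℕ} (A : Matrix (Fin n) (Fin n) ℝ) (f : Fin k → Fin n → ℝ) :
    A *ᵥ (∑ i, f i) = ∑ i, A *ᵥ f i := by
  have h := map_sum (Matrix.mulVecLin A) f Finset.univ
  simp only [Matrix.mulVecLin_apply] at h
  exact h

lemma kthSmallest_le_of_subspace {n : ℕ} (hn : 2 ≤ n) (A : Matrix (Fin n) (Fin n) ℝ)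
    (hA : A.IsHermitian) (c : ℝ) (u x : Fin n → ℝ) (hu : u ≠ 0) (hx : x ≠ 0)
    (hux : x ⬝ᵥ u = 0)
    (hq : ∀ a b : ℝ, ((a • u + b • x) ⬝ᵥ (A *ᵥ (a • u + b • x)))
      ≤ c * ((a • u + b • x) ⬝ᵥ (a • u + b • x))) :
    kthSmallest A 2 ≤ c := by
  by_contra hcon
  push_neg at hcon
  set μ := hA.eigenvalues with hμ
  set B := hA.eigenvectorBasis with hB
  set v : Fin n → (Fin n → ℝ) := fun i => ⇑(B i) with hv
  have hAv : ∀ i, A *ᵥ v i = μ i • v i := fun i => hA.mulVec_eigenvectorBasis i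
  have horth : ∀ i j, v i ⬝ᵥ v j = if i = j then 1 else 0 := by
    intro i j
    have h := orthonormal_iff_ite.mp B.orthonormal i j
    rw [EuclideanSpace.inner_eq_star_dotProduct] at h
    rw [dotProduct_comm]
    simpa using h
  have hdecomp : ∀ w : Fin n → ℝ, ∑ i, (v i ⬝ᵥ w) • v i = w := by
    intro w
    have h := B.sum_repr' (WithLp.toLp 2 w)
    have h2 : ∀ i, (inner ℝ (B i) (WithLp.toLp 2 w) : ℝ) = v i ⬝ᵥ w := by
      intro i
      rw [EuclideanSpace.inner_eq_star_dotProduct, dotProduct_comm]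
      rfl
    simp only [h2] at h
    have h3 := congrArg WithLp.ofLp h
    simpa using h3
  -- quadratic form in eigencoordinates
  have hdot : ∀ (cc dd : Fin n → ℝ),
      (∑ i, cc i • v i) ⬝ᵥ (∑ j, dd j • v j) = ∑ i, cc i * dd i := by
    intro cc dd
    rw [sum_dotProduct']
    refine Finset.sum_congr rfl fun i _ => ?_
    rw [smul_dotProduct, dotProduct_sum']
    simp only [dotProduct_smul, horth]
    rw [Finset.sum_eq_single i]
    · simp
    · intro j _ hj
      simp [Ne.symm hj]
    · simp
  have hform : ∀ w : Fin n → ℝ, w ⬝ᵥ (A *ᵥ w) = ∑ i, μ i * (v i ⬝ᵥ w)^2 := by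
    intro w
    conv_lhs => rw [← hdecomp w]
    have hAw : A *ᵥ (∑ i, (v i ⬝ᵥ w) • v i) = ∑ i, ((v i ⬝ᵥ w) * μ i) • v i := by
      rw [mulVec_sum']
      refine Finset.sum_congr rfl fun i _ => ?_
      rw [Matrix.mulVec_smul, hAv i, smul_smul]
    rw [hAw, hdot]
    refine Finset.sum_congr rfl fun i _ => ?_
    ring
  have hnorm : ∀ w : Fin n → ℝ, w ⬝ᵥ w = ∑ i, (v i ⬝ᵥ w)^2 := by
    intro w
    conv_lhs => rw [← hdecomp w]
    rw [hdot]
    refine Finset.sum_congr rfl fun i _ => ?_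
    ring
  -- sorted list analysis
  rw [kthSmallest, eigsList, dif_pos hA] at hcon
  obtain ⟨e0, e1, t, hl2⟩ : ∃ e0 e1 t,
      Multiset.sort (Finset.univ.val.map hA.eigenvalues) (· ≤ ·) = e0 :: e1 :: t := by
    have hlen : (Multiset.sort (Finset.univ.val.map hA.eigenvalues) (· ≤ ·)).length = n := by
      rw [Multiset.length_sort]; simp
    rcases hl3 : Multiset.sort (Finset.univ.val.map hA.eigenvalues) (· ≤ ·) with _ | ⟨a, _ | ⟨b, t⟩⟩
    · rw [hl3] at hlen; simp at hlen; omega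
    · rw [hl3] at hlen; simp at hlen; omega
    · exact ⟨a, b, t, rfl⟩
  have hsorted : (e0 :: e1 :: t).Pairwise (· ≤ ·) := by
    rw [← hl2]; exact Multiset.pairwise_sort _ _
  rw [hl2] at hcon
  have hcon1 : c < e1 := by simpa using hcon
  have htail : ∀ z ∈ e1 :: t, c < z := by
    intro z hz
    rcases List.mem_cons.mp hz with rfl | hz
    · exact hcon1
    · exact hcon1.trans_le ((List.pairwise_cons.mp (List.pairwise_cons.mp hsorted).2).1 z hz)
  have hcount : Multiset.countP (fun z => z ≤ c) (Finset.univ.val.map μ) ≤ 1 := by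
    have hcoe : (Finset.univ.val.map μ) = ((e0 :: e1 :: t : List ℝ) : Multiset ℝ) := by
      rw [← hl2]; exact (Multiset.sort_eq _ _).symm
    rw [hcoe, Multiset.coe_countP, List.countP_cons]
    have h0 : (e1 :: t).countP (fun z => decide (z ≤ c)) = 0 := by
      rw [List.countP_eq_zero]
      intro z hz
      simpa using (htail z hz).not_ge
    rw [h0]
    split <;> simp
  have hcard : ∀ i j, μ i ≤ c → μ j ≤ c → i = j := by
    intro i j hi hj
    by_contra hij
    have h2 : 2 ≤ (Finset.filter (fun i => μ i ≤ c) Finset.univ).card :=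
      Finset.one_lt_card.mpr ⟨i, by simpa using hi, j, by simpa using hj, hij⟩
    have hle1 : (Finset.filter (fun i => μ i ≤ c) Finset.univ).card ≤ 1 := by
      have := hcount
      rw [Multiset.countP_map] at this
      simpa [Finset.card, Finset.filter, Multiset.countP_eq_card_filter] using this
    omega
  -- choose a combination vanishing on small eigenvalues
  have hxu : u ⬝ᵥ x = 0 := by rwa [dotProduct_comm] at hux
  obtain ⟨a, b, hy0, hyS⟩ : ∃ a b : ℝ, (a • u + b • x) ≠ 0 ∧
      ∀ i, μ i ≤ c → v i ⬝ᵥ (a • u + b • x) = 0 := by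
    by_cases hz : ∀ i, μ i ≤ c → v i ⬝ᵥ u = 0
    · refine ⟨1, 0, by simpa using hu, fun i hi => by
        simp [dotProduct_add, dotProduct_smul, hz i hi]⟩
    · push_neg at hz
      obtain ⟨i₀, hi₀, hcu⟩ := hz
      refine ⟨v i₀ ⬝ᵥ x, -(v i₀ ⬝ᵥ u), ?_, ?_⟩
      · intro h0
        have hdx : x ⬝ᵥ ((v i₀ ⬝ᵥ x) • u + (-(v i₀ ⬝ᵥ u)) • x) = 0 := by rw [h0]; simp
        rw [dotProduct_add, dotProduct_smul, dotProduct_smul, hux] at hdx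
        have hxx : x ⬝ᵥ x = 0 := by
          have : (-(v i₀ ⬝ᵥ u)) * (x ⬝ᵥ x) = 0 := by
            simpa [smul_eq_mul] using hdx
          rcases mul_eq_zero.mp this with h | h
          · exact absurd (by linarith [neg_eq_zero.mp h]) hcu
          · exact h
        exact hx (funext fun j => by
          have := dotProduct_self_eq_zero.mp hxx
          exact congrFun this j)
      · intro i hi
        have hii : i = i₀ := hcard i i₀ hi hi₀
        subst hii
        rw [dotProduct_add, dotProduct_smul, dotProduct_smul]
        simp [smul_eq_mul]
        ring
  set y := a • u + b • x with hy
  have hcoord_ne : ∃ i, v i ⬝ᵥ y ≠ 0 := by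
    by_contra hall
    push_neg at hall
    apply hy0
    calc y = ∑ i, (v i ⬝ᵥ y) • v i := (hdecomp y).symm
    _ = 0 := by simp [hall]
  obtain ⟨iw, hiw⟩ := hcoord_ne
  have hiwgt : c < μ iw := by
    by_contra hle
    push_neg at hle
    exact hiw (hyS iw hle)
  have hlt : c * (y ⬝ᵥ y) < y ⬝ᵥ (A *ᵥ y) := by
    rw [hform y, hnorm y, Finset.mul_sum]
    apply Finset.sum_lt_sum
    · intro i _
      by_cases hi : μ i ≤ c
      · rw [hyS i hi]; simp
      · push_neg at hi
        nlinarith [sq_nonneg (v i ⬝ᵥ y)]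
    · refine ⟨iw, Finset.mem_univ iw, ?_⟩
      have hsq : 0 < (v iw ⬝ᵥ y)^2 := by positivity
      nlinarith
  exact absurd (hq a b) (not_le.mpr hlt)

lemma qp_symm (n : ℕ) (i j : Fin n) : Qp n j i = Qp n i j := by
  unfold Qp
  dsimp only
  exact if_congr (by omega) rfl (if_congr (by omega) rfl (if_congr (by omega) rfl
    (if_congr (by omega) rfl (if_congr (by omega) rfl (if_congr (by omega) rfl
    (if_congr (by omega) rfl (if_congr (by omega) rfl rfl)))))))

lemma lap_isHermitian {n : ℕ} (M : Matrix (Fin n) (Fin n) ℝ)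
    (hM : ∀ i j, M j i = M i j) : (Lap M).IsHermitian := by
  unfold Matrix.IsHermitian
  ext i j
  simp only [Lap, Matrix.conjTranspose_apply, Matrix.sub_apply, star_sub, star_trivial,
    Matrix.diagonal_apply]
  rw [hM i j]
  congr 1
  by_cases h : i = j
  · subst h; simp
  · rw [if_neg h, if_neg (Ne.symm h)]

lemma lap_mulVec_one {n : ℕ} (M : Matrix (Fin n) (Fin n) ℝ) :
    Lap M *ᵥ (fun _ => (1:ℝ)) = 0 := by
  funext i
  simp [Lap, Matrix.sub_mulVec, Matrix.mulVec, dotProduct, Matrix.diagonal,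
    Finset.sum_ite_eq]

lemma lap_energy {n : ℕ} (M : Matrix (Fin n) (Fin n) ℝ) (hM : ∀ i j, M j i = M i j)
    (x : Fin n → ℝ) :
    x ⬝ᵥ (Lap M *ᵥ x) = (∑ i, ∑ j, M i j * (x i - x j)^2) / 2 := by
  have hL : ∀ i, (Lap M *ᵥ x) i = (∑ j, M i j * x i) - ∑ j, M i j * x j := by
    intro i
    show ∑ j, (Matrix.diagonal (fun i => ∑ j, M i j) - M) i j * x j = _
    simp only [Matrix.sub_apply, Matrix.diagonal_apply, sub_mul, ite_mul, zero_mul]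
    rw [Finset.sum_sub_distrib, Finset.sum_ite_eq]
    simp [Finset.sum_mul]
  have e1 : x ⬝ᵥ (Lap M *ᵥ x)
      = (∑ i, ∑ j, M i j * x i ^ 2) - ∑ i, ∑ j, M i j * (x i * x j) := by
    rw [dotProduct, ← Finset.sum_sub_distrib]
    refine Finset.sum_congr rfl fun i _ => ?_
    rw [hL i, mul_sub, Finset.mul_sum, Finset.mul_sum, ← Finset.sum_sub_distrib,
      ← Finset.sum_sub_distrib]
    refine Finset.sum_congr rfl fun j _ => ?_
    ring
  have e2 : (∑ i, ∑ j, M i j * (x i - x j)^2)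
      = (∑ i, ∑ j, M i j * x i ^ 2) + (∑ i, ∑ j, M i j * x j ^ 2)
        - 2 * ∑ i, ∑ j, M i j * (x i * x j) := by
    rw [Finset.mul_sum, ← Finset.sum_add_distrib, ← Finset.sum_sub_distrib]
    refine Finset.sum_congr rfl fun i _ => ?_
    rw [Finset.mul_sum, ← Finset.sum_add_distrib, ← Finset.sum_sub_distrib]
    refine Finset.sum_congr rfl fun j _ => ?_
    ring
  have e3 : (∑ i, ∑ j, M i j * x j ^ 2) = ∑ i, ∑ j, M i j * x i ^ 2 := by
    rw [Finset.sum_comm]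
    refine Finset.sum_congr rfl fun i _ => Finset.sum_congr rfl fun j _ => ?_
    rw [hM i j]
  rw [e1, e2, e3]
  ring

lemma qp_path (n : ℕ) (i j : Fin n) (h1 : j.val = i.val + 1) (h2 : 2 ≤ i.val) :
    Qp n i j = 1 := by
  have hj := j.isLt
  unfold Qp
  dsimp only
  split_ifs <;> first | rfl | (exfalso; omega)

lemma qp_zero (n : ℕ) (i j : Fin n) (hij : i.val ≠ j.val)
    (hsm : ¬(i.val ≤ 2 ∧ j.val ≤ 2))
    (h1 : ¬(j.val = i.val + 1 ∧ 2 ≤ i.val)) (h2 : ¬(i.val = j.val + 1 ∧ 2 ≤ j.val)) :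
    Qp n i j = 0 := by
  have hi := i.isLt
  have hj := j.isLt
  unfold Qp
  dsimp only
  rw [if_neg (show ¬((i.val + 1 = 1 ∧ j.val + 1 = 2) ∨ (i.val + 1 = 2 ∧ j.val + 1 = 1)) by omega),
    if_neg (show ¬((i.val + 1 = 1 ∧ j.val + 1 = 3) ∨ (i.val + 1 = 3 ∧ j.val + 1 = 1)) by omega),
    if_neg (show ¬(i.val + 1 = 2 ∧ j.val + 1 = 2) by omega),
    if_neg (show ¬((i.val + 1 = 2 ∧ j.val + 1 = 3) ∨ (i.val + 1 = 3 ∧ j.val + 1 = 2)) by omega),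
    if_neg (show ¬(i.val + 1 = 3 ∧ j.val + 1 = 3) by omega),
    if_neg (show ¬((3 ≤ i.val + 1 ∧ i.val + 1 ≤ n - 1 ∧ j.val + 1 = i.val + 1 + 1) ∨
      (3 ≤ j.val + 1 ∧ j.val + 1 ≤ n - 1 ∧ i.val + 1 = j.val + 1 + 1)) by omega),
    if_neg (show ¬(i.val + 1 = j.val + 1 ∧ 4 ≤ i.val + 1 ∧ i.val + 1 ≤ n - 1) by omega),
    if_neg (show ¬(i.val + 1 = n ∧ j.val + 1 = n) by omega)]

lemma qp_edge (n : ℕ) (x : Fin n → ℝ) (h0 : ∀ i : Fin n, i.val ≤ 2 → x i = 0)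
    (i j : Fin n) :
    Qp n i j * (x i - x j)^2
      = (if j.val = i.val + 1 ∧ 2 ≤ i.val then (x i - x j)^2 else 0)
        + (if i.val = j.val + 1 ∧ 2 ≤ j.val then (x i - x j)^2 else 0) := by
  by_cases hc1 : j.val = i.val + 1 ∧ 2 ≤ i.val
  · rw [if_pos hc1, if_neg (show ¬(i.val = j.val + 1 ∧ 2 ≤ j.val) by omega),
      qp_path n i j hc1.1 hc1.2]
    ring
  · rw [if_neg hc1]
    by_cases hc2 : i.val = j.val + 1 ∧ 2 ≤ j.val
    · rw [if_pos hc2, qp_symm, qp_path n j i hc2.1 hc2.2]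
      ring
    · rw [if_neg hc2]
      by_cases hsm : i.val ≤ 2 ∧ j.val ≤ 2
      · rw [h0 i hsm.1, h0 j hsm.2]
        ring
      · by_cases hij : i.val = j.val
        · have : i = j := Fin.ext hij
          subst this
          ring
        · rw [qp_zero n i j hij hsm hc1 hc2]
          ring

lemma inner_sum_eval (n : ℕ) (g : ℕ → ℝ) (p : ℕ) :
    ∑ q ∈ Finset.range n, (if q = p + 1 ∧ 2 ≤ p then (g p - g q)^2 else 0)
      = if 2 ≤ p ∧ p + 1 < n then (g p - g (p + 1))^2 else 0 := by
  by_cases h2p : 2 ≤ p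
  · have hc : ∀ q, (if q = p + 1 ∧ 2 ≤ p then (g p - g q)^2 else 0)
        = if q = p + 1 then (g p - g q)^2 else 0 := by
      intro q
      exact if_congr (and_iff_left h2p) rfl rfl
    simp only [hc]
    rw [Finset.sum_ite_eq' (Finset.range n) (p + 1) (fun q => (g p - g q)^2)]
    simp only [Finset.mem_range, h2p, true_and]
  · simp only [h2p, and_false, if_false, Finset.sum_const_zero, false_and]

lemma qp_sum (n : ℕ) (hn : 6 ≤ n) (g : ℕ → ℝ) (hg : ∀ p, p ≤ 2 → g p = 0)
    (x : Fin n → ℝ) (hxg : x = fun i => g i.val) :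
    ∑ i, ∑ j, Qp n i j * (x i - x j)^2
      = 2 * ∑ t ∈ Finset.range (n - 3), (g (2 + t) - g (2 + t + 1))^2 := by
  subst hxg
  set x : Fin n → ℝ := fun i => g i.val with hx
  have h0 : ∀ i : Fin n, i.val ≤ 2 → x i = 0 := fun i h => hg _ h
  have hsplit : ∑ i, ∑ j, Qp n i j * (x i - x j)^2
      = (∑ i, ∑ j, (if j.val = i.val + 1 ∧ 2 ≤ i.val then (x i - x j)^2 else 0))
        + ∑ i, ∑ j, (if i.val = j.val + 1 ∧ 2 ≤ j.val then (x i - x j)^2 else 0) := by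
    rw [← Finset.sum_add_distrib]
    refine Finset.sum_congr rfl fun i _ => ?_
    rw [← Finset.sum_add_distrib]
    exact Finset.sum_congr rfl fun j _ => qp_edge n x h0 i j
  have hswap : ∑ i, ∑ j, (if i.val = j.val + 1 ∧ 2 ≤ j.val then (x i - x j)^2 else 0)
      = ∑ i, ∑ j, (if j.val = i.val + 1 ∧ 2 ≤ i.val then (x i - x j)^2 else 0) := by
    rw [Finset.sum_comm]
    refine Finset.sum_congr rfl fun i _ => Finset.sum_congr rfl fun j _ => ?_
    exact if_congr Iff.rfl (by ring) rfl
  rw [hsplit, hswap, ← two_mul]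
  congr 1
  have hinner : ∀ i : Fin n,
      (∑ j, (if (j : Fin n).val = i.val + 1 ∧ 2 ≤ i.val then (x i - x j)^2 else 0))
        = ∑ q ∈ Finset.range n, (if q = i.val + 1 ∧ 2 ≤ i.val then (g i.val - g q)^2 else 0) := by
    intro i
    exact Fin.sum_univ_eq_sum_range (fun q => if q = i.val + 1 ∧ 2 ≤ i.val
      then (g i.val - g q)^2 else 0) n
  calc ∑ i : Fin n, ∑ j : Fin n, (if (j : Fin n).val = i.val + 1 ∧ 2 ≤ i.val
          then (x i - x j)^2 else 0)
      = ∑ i : Fin n, (if 2 ≤ i.val ∧ i.val + 1 < n then (g i.val - g (i.val + 1))^2 else 0) := by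
        refine Finset.sum_congr rfl fun i _ => ?_
        rw [hinner i, inner_sum_eval]
    _ = ∑ p ∈ Finset.range n, (if 2 ≤ p ∧ p + 1 < n then (g p - g (p + 1))^2 else 0) :=
        Fin.sum_univ_eq_sum_range (fun p => if 2 ≤ p ∧ p + 1 < n then (g p - g (p + 1))^2 else 0) n
    _ = ∑ p ∈ Finset.Ico 2 (n - 1), (if 2 ≤ p ∧ p + 1 < n then (g p - g (p + 1))^2 else 0) := by
        refine (Finset.sum_subset ?_ ?_).symm
        · intro p hp
          rw [Finset.mem_Ico] at hp
          rw [Finset.mem_range]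
          omega
        · intro p hp hnp
          rw [Finset.mem_range] at hp
          rw [Finset.mem_Ico] at hnp
          rw [if_neg (by omega)]
    _ = ∑ p ∈ Finset.Ico 2 (n - 1), (g p - g (p + 1))^2 := by
        refine Finset.sum_congr rfl fun p hp => ?_
        rw [Finset.mem_Ico] at hp
        rw [if_pos (by omega)]
    _ = ∑ t ∈ Finset.range (n - 1 - 2), (g (2 + t) - g (2 + t + 1))^2 :=
        Finset.sum_Ico_eq_sum_range _ _ _
    _ = ∑ t ∈ Finset.range (n - 3), (g (2 + t) - g (2 + t + 1))^2 := by
        rw [show n - 1 - 2 = n - 3 by omega]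

lemma sum_fin_shift (n : ℕ) (F : ℕ → ℝ) (hF : ∀ p, p < 2 → F p = 0) :
    ∑ i : Fin n, F i.val = ∑ t ∈ Finset.range (n - 2), F (2 + t) := by
  rw [Fin.sum_univ_eq_sum_range]
  rw [← Finset.sum_Ico_eq_sum_range]
  refine (Finset.sum_subset ?_ ?_).symm
  · intro p hp
    rw [Finset.mem_Ico] at hp
    rw [Finset.mem_range]
    omega
  · intro p hp hnp
    rw [Finset.mem_range] at hp
    rw [Finset.mem_Ico] at hnp
    exact hF p (by omega)
lemma exp_sum_eq_zero (m : ℕ) (α φ : ℝ) (h1 : Complex.exp (α * Complex.I) ≠ 1)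
    (h2 : Complex.exp ((m : ℝ) * α * Complex.I) = 1) :
    ∑ p ∈ Finset.range m, Complex.exp ((((p : ℝ) * α + φ)) * Complex.I) = 0 := by
  have key : ∀ p : ℕ, Complex.exp ((((p : ℝ) * α + φ)) * Complex.I)
      = Complex.exp ((φ : ℝ) * Complex.I) * (Complex.exp ((α:ℝ) * Complex.I)) ^ p := by
    intro p
    rw [← Complex.exp_nat_mul, ← Complex.exp_add]
    congr 1
    push_cast
    ring
  simp only [key, ← Finset.mul_sum]
  rw [geom_sum_eq h1]
  have h3 : Complex.exp ((α:ℝ) * Complex.I) ^ m - 1 = 0 := by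
    rw [← Complex.exp_nat_mul]
    rw [show ((m:ℂ) * ((α:ℝ) * Complex.I)) = ((m : ℝ) * α * Complex.I : ℂ) by push_cast; ring, h2]
    ring
  rw [h3]
  simp

lemma cos_sum_eq_zero (m : ℕ) (α φ : ℝ) (h1 : Complex.exp (α * Complex.I) ≠ 1)
    (h2 : Complex.exp ((m : ℝ) * α * Complex.I) = 1) :
    ∑ p ∈ Finset.range m, Real.cos ((p : ℝ) * α + φ) = 0 := by
  have := congrArg Complex.re (exp_sum_eq_zero m α φ h1 h2)
  rw [Complex.re_sum] at this
  simp only [show ∀ x:ℕ, (((x:ℝ):ℂ)*(α:ℂ)+(φ:ℂ)) = ((x*α+φ : ℝ) : ℂ) from fun x => by push_cast; ring,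
    Complex.exp_ofReal_mul_I_re] at this
  exact this

lemma sin_sum_eq_zero (m : ℕ) (α φ : ℝ) (h1 : Complex.exp (α * Complex.I) ≠ 1)
    (h2 : Complex.exp ((m : ℝ) * α * Complex.I) = 1) :
    ∑ p ∈ Finset.range m, Real.sin ((p : ℝ) * α + φ) = 0 := by
  have := congrArg Complex.im (exp_sum_eq_zero m α φ h1 h2)
  rw [Complex.im_sum] at this
  simp only [show ∀ x:ℕ, (((x:ℝ):ℂ)*(α:ℂ)+(φ:ℂ)) = ((x*α+φ : ℝ) : ℂ) from fun x => by push_cast; ring,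
    Complex.exp_ofReal_mul_I_im] at this
  exact this
lemma exp_frac_ne_one (m k : ℕ) (hk : 0 < k) (hkm : k < m) :
    Complex.exp ((2 * Real.pi * k / m : ℝ) * Complex.I) ≠ 1 := by
  intro h
  rw [Complex.exp_eq_one_iff] at h
  obtain ⟨z, hz⟩ := h
  have hm0 : 0 < m := lt_of_le_of_lt (Nat.zero_le k) hkm
  have hm : (0:ℝ) < m := by exact_mod_cast hm0
  have h2 : ((2 * Real.pi * k / m : ℝ) : ℂ) * Complex.I
      = ((z : ℂ) * (2 * (Real.pi : ℂ))) * Complex.I := by rw [hz]; ring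
  have h3 := mul_right_cancel₀ Complex.I_ne_zero h2
  have hR : (2 * Real.pi * k / m : ℝ) = (z:ℝ) * (2 * Real.pi) := by exact_mod_cast h3
  have hpi := Real.pi_pos
  have hK : (k : ℝ) = (z:ℝ) * m := by
    field_simp at hR
    nlinarith [hR]
  have hKZ : (k : ℤ) = z * m := by exact_mod_cast hK
  have hmz : (0:ℤ) < (m:ℤ) := by exact_mod_cast hm0
  rcases le_or_gt z 0 with h0 | h0
  · have : (k:ℤ) ≤ 0 := by nlinarith
    omega
  · have h1 : (1:ℤ) ≤ z := h0
    have : (m:ℤ) ≤ k := by nlinarith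
    omega

lemma exp_frac_pow_one (m k : ℕ) (hm : m ≠ 0) :
    Complex.exp ((m : ℝ) * (2 * Real.pi * k / m : ℝ) * Complex.I) = 1 := by
  rw [Complex.exp_eq_one_iff]
  refine ⟨k, ?_⟩
  have hm' : (m:ℂ) ≠ 0 := Nat.cast_ne_zero.mpr hm
  push_cast
  field_simp

lemma trig_term (A B : ℝ) : (Real.sin A - Real.sin B)^2
    = 1 - Real.cos (B - A) - Real.cos (2*A)/2 - Real.cos (2*B)/2 + Real.cos (A + B) := by
  rw [Real.cos_sub, Real.cos_add, Real.cos_two_mul, Real.cos_two_mul]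
  linear_combination Real.sin_sq_add_cos_sq A + Real.sin_sq_add_cos_sq B

lemma exp1_ne (m : ℕ) (hm : 3 ≤ m) :
    Complex.exp ((2*Real.pi/(m:ℝ) : ℝ) * Complex.I) ≠ 1 := by
  have h : (2 * Real.pi * ((1:ℕ):ℝ) / (m:ℝ)) = 2*Real.pi/(m:ℝ) := by norm_num
  exact h ▸ exp_frac_ne_one m 1 one_pos (by omega)

lemma exp1_pow (m : ℕ) (hm : 3 ≤ m) :
    Complex.exp ((m:ℝ) * (2*Real.pi/(m:ℝ) : ℝ) * Complex.I) = 1 := by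
  have h : (2 * Real.pi * ((1:ℕ):ℝ) / (m:ℝ)) = 2*Real.pi/(m:ℝ) := by norm_num
  exact h ▸ exp_frac_pow_one m 1 (by omega)

lemma exp2_ne (m : ℕ) (hm : 3 ≤ m) :
    Complex.exp ((2*(2*Real.pi/(m:ℝ)) : ℝ) * Complex.I) ≠ 1 := by
  have h : (2 * Real.pi * ((2:ℕ):ℝ) / (m:ℝ)) = 2*(2*Real.pi/(m:ℝ)) := by push_cast; ring
  exact h ▸ exp_frac_ne_one m 2 two_pos (by omega)

lemma exp2_pow (m : ℕ) (hm : 3 ≤ m) :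
    Complex.exp ((m:ℝ) * (2*(2*Real.pi/(m:ℝ)) : ℝ) * Complex.I) = 1 := by
  have h : (2 * Real.pi * ((2:ℕ):ℝ) / (m:ℝ)) = 2*(2*Real.pi/(m:ℝ)) := by push_cast; ring
  exact h ▸ exp_frac_pow_one m 2 (by omega)

lemma sum_sin_theta (m : ℕ) (hm : 3 ≤ m) :
    ∑ t ∈ Finset.range m, Real.sin ((t:ℝ) * (2*Real.pi/(m:ℝ))) = 0 := by
  have := sin_sum_eq_zero m (2*Real.pi/(m:ℝ)) 0 (exp1_ne m hm) (exp1_pow m hm)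
  simpa using this

lemma sum_sin_sq (m : ℕ) (hm : 3 ≤ m) :
    ∑ t ∈ Finset.range m, Real.sin ((t:ℝ) * (2*Real.pi/(m:ℝ)))^2 = m / 2 := by
  set θ := 2*Real.pi/(m:ℝ) with hθ
  have hterm : ∀ t : ℕ, Real.sin ((t:ℝ)*θ)^2 = 1/2 - Real.cos ((t:ℝ)*(2*θ) + 0)/2 := by
    intro t
    rw [Real.sin_sq_eq_half_sub, show 2*((t:ℝ)*θ) = (t:ℝ)*(2*θ) + 0 by ring]
  simp only [hterm]
  rw [Finset.sum_sub_distrib, ← Finset.sum_div, ← Finset.sum_div,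
    cos_sum_eq_zero m (2*θ) 0 (exp2_ne m hm) (exp2_pow m hm)]
  simp

lemma sum_edge_sq (m : ℕ) (hm : 3 ≤ m) :
    ∑ t ∈ Finset.range m,
      (Real.sin ((t:ℝ) * (2*Real.pi/(m:ℝ))) - Real.sin (((t:ℝ)+1) * (2*Real.pi/(m:ℝ))))^2
      = m * (1 - Real.cos (2*Real.pi/(m:ℝ))) := by
  set θ := 2*Real.pi/(m:ℝ) with hθ
  have hterm : ∀ t : ℕ, (Real.sin ((t:ℝ)*θ) - Real.sin (((t:ℝ)+1)*θ))^2
      = (1 - Real.cos θ) - Real.cos ((t:ℝ)*(2*θ) + 0)/2 - Real.cos ((t:ℝ)*(2*θ) + 2*θ)/2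
        + Real.cos ((t:ℝ)*(2*θ) + θ) := by
    intro t
    have e := trig_term ((t:ℝ)*θ) ((t:ℝ)*θ + θ)
    rw [show ((t:ℝ)+1)*θ = (t:ℝ)*θ + θ by ring, e,
      show (t:ℝ)*θ + θ - (t:ℝ)*θ = θ by ring,
      show 2*((t:ℝ)*θ) = (t:ℝ)*(2*θ) + 0 by ring,
      show 2*((t:ℝ)*θ + θ) = (t:ℝ)*(2*θ) + 2*θ by ring,
      show (t:ℝ)*θ + ((t:ℝ)*θ + θ) = (t:ℝ)*(2*θ) + θ by ring]
  simp only [hterm]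
  rw [Finset.sum_add_distrib, Finset.sum_sub_distrib, Finset.sum_sub_distrib,
    ← Finset.sum_div, ← Finset.sum_div,
    cos_sum_eq_zero m (2*θ) 0 (exp2_ne m hm) (exp2_pow m hm),
    cos_sum_eq_zero m (2*θ) (2*θ) (exp2_ne m hm) (exp2_pow m hm),
    cos_sum_eq_zero m (2*θ) θ (exp2_ne m hm) (exp2_pow m hm),
    Finset.sum_const, Finset.card_range]
  simp [nsmul_eq_mul]

theorem stmt6 (n : ℕ) (hn : 6 ≤ n) :
    kthSmallest (Lap (Qp n)) 2 ≤ 2 - 2 * Real.cos (2 * Real.pi / ((n : ℝ) - 3)) := by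
  have hm : 3 ≤ n - 3 := by omega
  set m := n - 3 with hmdef
  have hmR : ((n:ℝ) - 3) = (m:ℝ) := by
    rw [hmdef, Nat.cast_sub (by omega)]
    norm_num
  rw [hmR]
  have hm0 : (0:ℝ) < (m:ℝ) := by exact_mod_cast (show 0 < m by omega)
  set θ := 2*Real.pi/(m:ℝ) with hθdef
  set c := 2 - 2*Real.cos θ with hcdef
  set g : ℕ → ℝ := fun p => Real.sin (((p - 2 : ℕ):ℝ) * θ) with hgdef
  set x : Fin n → ℝ := fun i => g i.val with hxdef
  set u : Fin n → ℝ := fun _ => 1 with hudef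
  have hg0 : ∀ p, p ≤ 2 → g p = 0 := by
    intro p hp
    simp [hgdef, show p - 2 = 0 by omega]
  have hgt : ∀ t : ℕ, g (2+t) = Real.sin ((t:ℝ)*θ) := by
    intro t
    simp only [hgdef]
    rw [show 2+t-2 = t by omega]
  have hlast : Real.sin ((m:ℝ)*θ) = 0 := by
    rw [show (m:ℝ)*θ = 2*Real.pi by rw [hθdef]; field_simp]
    exact Real.sin_two_pi
  have hA : (Lap (Qp n)).IsHermitian := lap_isHermitian _ (fun i j => qp_symm n i j)
  have hu : u ≠ 0 := by
    intro h
    have := congrFun h ⟨0, by omega⟩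
    simp [hudef] at this
  have hθpos : 0 < θ := by
    rw [hθdef]
    positivity
  have hθlt : θ < Real.pi := by
    rw [hθdef, div_lt_iff₀ hm0]
    have h3 : (3:ℝ) ≤ (m:ℝ) := by exact_mod_cast hm
    nlinarith [Real.pi_pos]
  have hsinθ : 0 < Real.sin θ := Real.sin_pos_of_pos_of_lt_pi hθpos hθlt
  have hx : x ≠ 0 := by
    intro h
    have h3 := congrFun h (⟨3, by omega⟩ : Fin n)
    simp only [hxdef, Pi.zero_apply] at h3
    rw [show (3:ℕ) = 2 + 1 by norm_num, hgt 1] at h3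
    simp only [Nat.cast_one, one_mul] at h3
    rw [h3] at hsinθ
    simp at hsinθ
  have hux : x ⬝ᵥ u = 0 := by
    show ∑ i, x i * u i = 0
    simp only [hudef, hxdef, mul_one]
    rw [sum_fin_shift n g (fun p hp => hg0 p (by omega)),
      show n - 2 = m + 1 by omega, Finset.sum_range_succ]
    simp only [hgt]
    rw [sum_sin_theta m hm, hlast]
    ring
  have hxx : x ⬝ᵥ x = (m:ℝ)/2 := by
    show ∑ i, x i * x i = (m:ℝ)/2
    simp only [hxdef]
    rw [sum_fin_shift n (fun p => g p * g p)
        (fun p hp => by show g p * g p = 0; rw [hg0 p (by omega)]; ring),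
      show n - 2 = m + 1 by omega, Finset.sum_range_succ]
    simp only [hgt]
    have hsq : ∀ t : ℕ, Real.sin ((t:ℝ)*θ) * Real.sin ((t:ℝ)*θ) = Real.sin ((t:ℝ)*θ)^2 :=
      fun t => (sq _).symm
    simp only [hsq]
    rw [sum_sin_sq m hm, hlast]
    ring
  have hE : x ⬝ᵥ (Lap (Qp n) *ᵥ x) = c * ((m:ℝ)/2) := by
    rw [lap_energy _ (fun i j => qp_symm n i j) x, qp_sum n hn g hg0 x hxdef]
    have hterm : ∀ t : ℕ, (g (2 + t) - g (2 + t + 1))^2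
        = (Real.sin ((t:ℝ)*θ) - Real.sin (((t:ℝ)+1)*θ))^2 := by
      intro t
      rw [show 2+t+1 = 2+(t+1) by omega, hgt t, hgt (t+1)]
      push_cast
      ring_nf
    simp only [hterm]
    rw [sum_edge_sq m hm, hcdef]
    ring
  have hu0 : Lap (Qp n) *ᵥ u = 0 := lap_mulVec_one _
  have hLsym : (Lap (Qp n))ᵀ = Lap (Qp n) := by
    ext i j
    have h := congrFun (congrFun hA i) j
    simpa [Matrix.conjTranspose_apply] using h
  have huAx : u ⬝ᵥ (Lap (Qp n) *ᵥ x) = 0 := by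
    rw [Matrix.dotProduct_mulVec, ← Matrix.mulVec_transpose, hLsym, hu0,
      zero_dotProduct]
  have hxu' : u ⬝ᵥ x = 0 := by rw [dotProduct_comm]; exact hux
  have huu : u ⬝ᵥ u = (n:ℝ) := by
    show ∑ i, u i * u i = (n:ℝ)
    simp [hudef]
  have hc0 : (0:ℝ) ≤ c := by
    have := Real.cos_le_one θ
    rw [hcdef]
    linarith
  have hn0 : (0:ℝ) ≤ (n:ℝ) := by positivity
  have hq : ∀ a b : ℝ, ((a • u + b • x) ⬝ᵥ (Lap (Qp n) *ᵥ (a • u + b • x)))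
      ≤ c * ((a • u + b • x) ⬝ᵥ (a • u + b • x)) := by
    intro a b
    rw [Matrix.mulVec_add, Matrix.mulVec_smul, Matrix.mulVec_smul, hu0, smul_zero, zero_add]
    rw [add_dotProduct, smul_dotProduct, smul_dotProduct,
      dotProduct_smul, dotProduct_smul, huAx, hE]
    simp only [add_dotProduct, dotProduct_add, smul_dotProduct,
      dotProduct_smul, huu, hxx, hux, hxu', smul_eq_mul, smul_zero, mul_zero,
      add_zero, zero_add]
    have key : 0 ≤ c * (a * (a * (n:ℝ))) := by
      have : a * (a * (n:ℝ)) = a^2 * (n:ℝ) := by ring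
      rw [this]
      positivity
    have e1 : b * (b * (c * ((m:ℝ)/2))) = c * (b * (b * ((m:ℝ)/2))) := by ring
    have e2 : c * (a * (a * (n:ℝ)) + b * (b * ((m:ℝ)/2)))
        = c * (a * (a * (n:ℝ))) + c * (b * (b * ((m:ℝ)/2))) := by ring
    rw [e1, e2]
    exact le_add_of_nonneg_left key
  exact kthSmallest_le_of_subspace (by omega) _ hA c u x hu hx hux hq
end

section
/- Let n ≥ 4 be an integer. Then for every vector y = (y₁,…,y_n)ᵀ ∈ ℝⁿ, the quadratic form of the Laplacian satisfies yᵀ 𝔏(Q_n) y = (n−2)·Σ_{i=1}^{n−1} (y_{i+1} − y_i)² + 2·Σ_{i=1}^{n−2} (y_{i+2} − y_i)². -/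
open Matrix

open Finset in
lemma decomp_s14 (a b : ℝ) (i j : ℕ) (g : ℝ) :
    (if ((i:ℤ) - j).natAbs = 1 then a else if ((i:ℤ) - j).natAbs = 2 then b else 0) * g
    = (if j = i + 1 then a * g else 0) + (if i = j + 1 then a * g else 0)
      + (if j = i + 2 then b * g else 0) + (if i = j + 2 then b * g else 0) := by
  have h1 : (((i:ℤ) - j).natAbs = 1) ↔ (j = i + 1 ∨ i = j + 1) := by
    rw [Int.natAbs_eq_iff]; omega
  have h2 : (((i:ℤ) - j).natAbs = 2) ↔ (j = i + 2 ∨ i = j + 2) := by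
    rw [Int.natAbs_eq_iff]; omega
  simp only [h1, h2]
  split_ifs <;> first | ring1 | (exfalso; omega)

open Finset in
lemma lap_quad {n : ℕ} (M : Matrix (Fin n) (Fin n) ℝ) (y : Fin n → ℝ) :
    y ⬝ᵥ (Lap M *ᵥ y) = ∑ i, ∑ j, M i j * (y i ^ 2 - y i * y j) := by
  simp only [Lap, dotProduct, mulVec, Matrix.sub_apply, diagonal_apply, dotProduct]
  refine Finset.sum_congr rfl fun i _ => ?_
  have hd : ∑ j, (if i = j then ∑ k, M i k else 0) * y j = (∑ k, M i k) * y i := by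
    simp only [ite_mul, zero_mul]
    rw [Finset.sum_ite_eq Finset.univ i (fun j => (∑ k, M i k) * y j)]
    simp
  calc y i * ∑ j, ((if i = j then ∑ k, M i k else 0) - M i j) * y j
      = y i * (∑ j, (if i = j then ∑ k, M i k else 0) * y j - ∑ j, M i j * y j) := by
        rw [← Finset.sum_sub_distrib]
        congr 1
        exact Finset.sum_congr rfl fun j _ => by ring
    _ = y i * ((∑ k, M i k) * y i - ∑ j, M i j * y j) := by rw [hd]
    _ = ∑ j, M i j * (y i ^ 2 - y i * y j) := by
        rw [mul_sub, Finset.sum_mul, Finset.mul_sum, Finset.mul_sum, ← Finset.sum_sub_distrib]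
        exact Finset.sum_congr rfl fun j _ => by ring

open Finset in
lemma sum_shift (n k : ℕ) (F : ℕ → ℝ) :
    ∑ i ∈ range n, (if i + k ∈ range n then F i else 0) = ∑ i ∈ range (n - k), F i := by
  rw [← Finset.sum_subset (Finset.range_subset_range.2 (Nat.sub_le n k))
    (fun x hx hnx => by simp only [mem_range] at *; rw [if_neg]; omega)]
  exact Finset.sum_congr rfl fun i hi => by
    simp only [mem_range] at *; rw [if_pos]; omega

open Finset in
lemma key_s14 (n : ℕ) (a b : ℝ) (z : ℕ → ℝ) :
    ∑ i ∈ range n, ∑ j ∈ range n,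
      (if ((i:ℤ) - j).natAbs = 1 then a else if ((i:ℤ) - j).natAbs = 2 then b else 0)
        * (z i ^ 2 - z i * z j)
    = a * ∑ i ∈ range (n - 1), (z (i + 1) - z i) ^ 2
      + b * ∑ i ∈ range (n - 2), (z (i + 2) - z i) ^ 2 := by
  have hT1 : ∀ (c : ℝ) (k : ℕ),
      ∑ i ∈ range n, ∑ j ∈ range n, (if j = i + k then c * (z i ^ 2 - z i * z j) else 0)
      = ∑ i ∈ range (n - k), c * (z i ^ 2 - z i * z (i + k)) := by
    intro c k
    rw [Finset.sum_congr rfl fun i _ =>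
      Finset.sum_ite_eq' (range n) (i + k) (fun j => c * (z i ^ 2 - z i * z j))]
    exact sum_shift n k _
  have hT2 : ∀ (c : ℝ) (k : ℕ),
      ∑ i ∈ range n, ∑ j ∈ range n, (if i = j + k then c * (z i ^ 2 - z i * z j) else 0)
      = ∑ j ∈ range (n - k), c * (z (j + k) ^ 2 - z (j + k) * z j) := by
    intro c k
    rw [Finset.sum_comm]
    rw [Finset.sum_congr rfl fun j _ =>
      Finset.sum_ite_eq' (range n) (j + k) (fun i => c * (z i ^ 2 - z i * z j))]
    exact sum_shift n k _
  calc ∑ i ∈ range n, ∑ j ∈ range n,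
        (if ((i:ℤ) - j).natAbs = 1 then a else if ((i:ℤ) - j).natAbs = 2 then b else 0)
          * (z i ^ 2 - z i * z j)
      = ∑ i ∈ range n, ∑ j ∈ range n,
          ((if j = i + 1 then a * (z i ^ 2 - z i * z j) else 0)
           + (if i = j + 1 then a * (z i ^ 2 - z i * z j) else 0)
           + (if j = i + 2 then b * (z i ^ 2 - z i * z j) else 0)
           + (if i = j + 2 then b * (z i ^ 2 - z i * z j) else 0)) :=
        Finset.sum_congr rfl fun i _ => Finset.sum_congr rfl fun j _ => decomp_s14 a b i j _
    _ = (∑ i ∈ range n, ∑ j ∈ range n, (if j = i + 1 then a * (z i ^ 2 - z i * z j) else 0))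
        + (∑ i ∈ range n, ∑ j ∈ range n, (if i = j + 1 then a * (z i ^ 2 - z i * z j) else 0))
        + (∑ i ∈ range n, ∑ j ∈ range n, (if j = i + 2 then b * (z i ^ 2 - z i * z j) else 0))
        + (∑ i ∈ range n, ∑ j ∈ range n, (if i = j + 2 then b * (z i ^ 2 - z i * z j) else 0)) := by
        simp only [Finset.sum_add_distrib]
    _ = (∑ i ∈ range (n - 1), a * (z i ^ 2 - z i * z (i + 1)))
        + (∑ j ∈ range (n - 1), a * (z (j + 1) ^ 2 - z (j + 1) * z j))
        + (∑ i ∈ range (n - 2), b * (z i ^ 2 - z i * z (i + 2)))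
        + (∑ j ∈ range (n - 2), b * (z (j + 2) ^ 2 - z (j + 2) * z j)) := by
        rw [hT1 a 1, hT2 a 1, hT1 b 2, hT2 b 2]
    _ = a * ∑ i ∈ range (n - 1), (z (i + 1) - z i) ^ 2
        + b * ∑ i ∈ range (n - 2), (z (i + 2) - z i) ^ 2 := by
        rw [add_assoc]
        congr 1
        · rw [← Finset.sum_add_distrib, Finset.mul_sum]
          exact Finset.sum_congr rfl fun i _ => by ring
        · rw [← Finset.sum_add_distrib, Finset.mul_sum]
          exact Finset.sum_congr rfl fun i _ => by ring

open Finset in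
theorem stmt14 (n : ℕ) (hn : 4 ≤ n) (y : Fin n → ℝ) :
    y ⬝ᵥ (Lap (Qmat n) *ᵥ y) =
      ((n : ℝ) - 2) *
          ∑ i : Fin (n - 1),
            (y ⟨i.val + 1, by have := i.isLt; omega⟩ - y ⟨i.val, by have := i.isLt; omega⟩) ^ 2 +
        2 * ∑ i : Fin (n - 2),
            (y ⟨i.val + 2, by have := i.isLt; omega⟩ - y ⟨i.val, by have := i.isLt; omega⟩) ^ 2 := by
  set z : ℕ → ℝ := fun k => if h : k < n then y ⟨k, h⟩ else 0 with hzdef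
  have hz : ∀ (k : ℕ) (h : k < n), z k = y ⟨k, h⟩ := fun k h => by
    simp only [hzdef]; exact dif_pos h
  have hzf : ∀ i : Fin n, z i.val = y i := fun i => hz i.val i.isLt
  rw [lap_quad]
  have step2 : ∑ i : Fin n, ∑ j : Fin n, Qmat n i j * (y i ^ 2 - y i * y j)
      = ∑ i ∈ range n, ∑ j ∈ range n,
          (if (((i:ℕ):ℤ) - (j:ℕ)).natAbs = 1 then (n : ℝ) - 2
           else if (((i:ℕ):ℤ) - (j:ℕ)).natAbs = 2 then 2 else 0)
            * (z i ^ 2 - z i * z j) := by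
    have hQ : ∀ i j : Fin n, Qmat n i j * (y i ^ 2 - y i * y j)
        = (if ((i.val:ℤ) - j.val).natAbs = 1 then (n : ℝ) - 2
           else if ((i.val:ℤ) - j.val).natAbs = 2 then 2 else 0)
            * (z i.val ^ 2 - z i.val * z j.val) := by
      intro i j
      rcases eq_or_ne i j with rfl | hij
      · have h1 : y i ^ 2 - y i * y i = 0 := by ring
        have h2 : z i.val ^ 2 - z i.val * z i.val = 0 := by ring
        rw [h1, h2, mul_zero, mul_zero]
      · have hd0 : ((i.val:ℤ) - j.val).natAbs ≠ 0 := by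
          have : i.val ≠ j.val := fun h => hij (Fin.ext h)
          omega
        rw [hzf i, hzf j]
        congr 1
        simp only [Qmat]
        rw [if_neg hd0]
    calc ∑ i : Fin n, ∑ j : Fin n, Qmat n i j * (y i ^ 2 - y i * y j)
        = ∑ i : Fin n, ∑ j : Fin n,
            (if ((i.val:ℤ) - j.val).natAbs = 1 then (n : ℝ) - 2
             else if ((i.val:ℤ) - j.val).natAbs = 2 then 2 else 0)
              * (z i.val ^ 2 - z i.val * z j.val) :=
          Finset.sum_congr rfl fun i _ => Finset.sum_congr rfl fun j _ => hQ i j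
      _ = ∑ i : Fin n, ∑ j ∈ range n,
            (if ((i.val:ℤ) - (j:ℕ)).natAbs = 1 then (n : ℝ) - 2
             else if ((i.val:ℤ) - (j:ℕ)).natAbs = 2 then 2 else 0)
              * (z i.val ^ 2 - z i.val * z j) :=
          Finset.sum_congr rfl fun i _ => Fin.sum_univ_eq_sum_range
            (fun j => (if ((i.val:ℤ) - (j:ℕ)).natAbs = 1 then (n : ℝ) - 2
             else if ((i.val:ℤ) - (j:ℕ)).natAbs = 2 then 2 else 0)
              * (z i.val ^ 2 - z i.val * z j)) n
      _ = _ := Fin.sum_univ_eq_sum_range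
          (fun i => ∑ j ∈ range n,
            (if ((i:ℤ) - (j:ℕ)).natAbs = 1 then (n : ℝ) - 2
             else if ((i:ℤ) - (j:ℕ)).natAbs = 2 then 2 else 0)
              * (z i ^ 2 - z i * z j)) n
  rw [step2, key_s14 n ((n:ℝ) - 2) 2 z]
  congr 1
  · congr 1
    rw [← Fin.sum_univ_eq_sum_range (fun i => (z (i + 1) - z i) ^ 2) (n - 1)]
    refine Finset.sum_congr rfl fun i _ => ?_
    have h1 : i.val + 1 < n := by have := i.isLt; omega
    have h2 : i.val < n := by omega
    rw [hz _ h1, hz _ h2]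
  · congr 1
    rw [← Fin.sum_univ_eq_sum_range (fun i => (z (i + 2) - z i) ^ 2) (n - 2)]
    refine Finset.sum_congr rfl fun i _ => ?_
    have h1 : i.val + 2 < n := by have := i.isLt; omega
    have h2 : i.val < n := by omega
    rw [hz _ h1, hz _ h2]
end
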